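/- The elliptic curve y² = x³ − x has exactly four rational points: the point at infinity, (0,0), (1,0), and (−1,0). -/

import Mathlib

lemma zmod4_two_mul (K : ZMod 4) : (2 * K) ^ 4 = 0 := by revert K; decide
lemma zmod4_odd (L : ZMod 4) : (2 * L + 1) ^ 4 = 1 := by revert L; decide
lemma zmod4_sq (R : ZMod 4) : (0 : ZMod 4) ≠ 1 + R ^ 2 := by revert R; decide

lemma mod4_contra {p q r : ℤ} (hp : Even p) (hq : Odd q) (E : p ^ 4 = q ^ 4 + r ^ 2) :
    False := by
  obtain ⟨k, hk⟩ := hp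
  obtain ⟨l, hl⟩ := hq
  have h4 : ((p : ZMod 4)) ^ 4 = (q : ZMod 4) ^ 4 + (r : ZMod 4) ^ 2 := by
    exact_mod_cast congrArg (fun z : ℤ => (z : ZMod 4)) E
  have hpz : ((p : ZMod 4)) ^ 4 = 0 := by
    have h : (p : ZMod 4) = 2 * (k : ZMod 4) := by rw [hk]; push_cast; ring
    rw [h]; exact zmod4_two_mul _
  have hqz : ((q : ZMod 4)) ^ 4 = 1 := by
    have h : (q : ZMod 4) = 2 * (l : ZMod 4) + 1 := by rw [hl]; push_cast; ring
    rw [h]; exact zmod4_odd _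
  rw [hpz, hqz] at h4
  exact zmod4_sq _ h4

lemma two_not_unit : ¬ IsUnit (2 : ℤ) := by
  rw [Int.isUnit_iff]; omega

lemma natAbs_lt_of_sq_lt {a p : ℤ} (h : a ^ 2 < p ^ 2) : a.natAbs < p.natAbs := by
  have h1 : ((a.natAbs : ℤ)) ^ 2 = a ^ 2 := by
    rw [← Int.abs_eq_natAbs, ← abs_pow, abs_of_nonneg (by positivity : (0:ℤ) ≤ a ^ 2)]
  have h2 : ((p.natAbs : ℤ)) ^ 2 = p ^ 2 := by
    rw [← Int.abs_eq_natAbs, ← abs_pow, abs_of_nonneg (by positivity : (0:ℤ) ≤ p ^ 2)]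
  have h3 : a.natAbs ^ 2 < p.natAbs ^ 2 := by exact_mod_cast h1 ▸ h2 ▸ h
  exact lt_of_pow_lt_pow_left₀ 2 (Nat.zero_le _) h3

lemma natAbs_lt_of_pow4_lt_self {a p : ℤ} (hp : 0 < p) (h : a ^ 4 < p) : a.natAbs < p.natAbs := by
  have h1 : ((a.natAbs : ℤ)) ^ 4 = a ^ 4 := by
    rw [← Int.abs_eq_natAbs, ← abs_pow, abs_of_nonneg (by positivity : (0:ℤ) ≤ a ^ 4)]
  have h2 : (p.natAbs : ℤ) = p := Int.natAbs_of_nonneg hp.le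
  have h3 : a.natAbs ^ 4 < p.natAbs := by exact_mod_cast h1 ▸ h2 ▸ h
  exact lt_of_le_of_lt (Nat.le_self_pow (by norm_num) _) h3

lemma quarts_of_coprime {a b c : ℤ} (ha : 0 < a) (hb : 0 < b) (h : IsCoprime a b)
    (heq : a * b = c ^ 4) : ∃ g h : ℤ, a = g ^ 4 ∧ b = h ^ 4 := by
  have h2 : a * b = (c ^ 2) ^ 2 := by rw [heq]; ring
  obtain ⟨a0, ha0⟩ := Int.sq_of_isCoprime h h2
  obtain ⟨b0, hb0⟩ := Int.sq_of_isCoprime h.symm (by rw [mul_comm]; exact h2)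
  have ha0' : a = a0 ^ 2 := by
    rcases ha0 with h' | h'
    · exact h'
    · nlinarith [sq_nonneg a0]
  have hb0' : b = b0 ^ 2 := by
    rcases hb0 with h' | h'
    · exact h'
    · nlinarith [sq_nonneg b0]
  have ha0ne : a0 ≠ 0 := by rintro rfl; simp at ha0'; omega
  have hb0ne : b0 ≠ 0 := by rintro rfl; simp at hb0'; omega
  have ha1 : a = |a0| ^ 2 := by rw [sq_abs]; exact ha0'
  have hb1 : b = |b0| ^ 2 := by rw [sq_abs]; exact hb0'
  set A := |a0| with hA
  set B := |b0| with hB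
  have hApos : 0 < A := abs_pos.mpr ha0ne
  have hBpos : 0 < B := abs_pos.mpr hb0ne
  have hco : IsCoprime A B := by
    have : IsCoprime (A ^ 2) (B ^ 2) := by rw [← ha1, ← hb1]; exact h
    exact ((IsCoprime.pow_left_iff two_pos).mp ((IsCoprime.pow_right_iff two_pos).mp this))
  have hAB : A * B = (c ^ 2) := by
    have h4 : (A * B) ^ 2 = (c ^ 2) ^ 2 := by rw [mul_pow, ← ha1, ← hb1]; rw [heq]; ring
    have h5 := eq_or_eq_neg_of_sq_eq_sq _ _ h4
    rcases h5 with h' | h'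
    · exact h'
    · exfalso; nlinarith [sq_nonneg c]
  obtain ⟨g0, hg0⟩ := Int.sq_of_isCoprime hco hAB
  obtain ⟨h0, hh0⟩ := Int.sq_of_isCoprime hco.symm (by rw [mul_comm]; exact hAB)
  have hg : A = g0 ^ 2 := by rcases hg0 with h' | h'; exact h'; nlinarith [sq_nonneg g0]
  have hh : B = h0 ^ 2 := by rcases hh0 with h' | h'; exact h'; nlinarith [sq_nonneg h0]
  exact ⟨g0, h0, by rw [ha1, hg]; ring, by rw [hb1, hh]; ring⟩

lemma descent_step {p q r : ℤ} (hp : 0 < p) (hq : 0 < q) (hr : 0 < r)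
    (hco : IsCoprime p q) (E : p ^ 4 = q ^ 4 + r ^ 2) :
    ∃ p' q' r' : ℤ, q' ≠ 0 ∧ r' ≠ 0 ∧ p'.natAbs < p.natAbs ∧ p' ^ 4 = q' ^ 4 + r' ^ 2 := by
  -- p is odd
  have hpodd : Odd p := by
    rcases Int.even_or_odd p with hpe | hpo
    · exfalso
      have hqodd : Odd q := by
        rcases Int.even_or_odd q with hqe | hqo
        · exact absurd (hco.isUnit_of_dvd' hpe.two_dvd hqe.two_dvd) two_not_unit
        · exact hqo
      exact mod4_contra hpe hqodd E
    · exact hpo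
  rcases Int.even_or_odd q with hqe | hqo
  · -- q even, r odd
    have hrodd : Odd r := by
      rcases Int.even_or_odd r with hre | hro
      · exfalso
        have : Even (p ^ 4) := by
          rw [E]
          exact Even.add (Int.even_pow.mpr ⟨hqe, by norm_num⟩)
            (Int.even_pow.mpr ⟨hre, by norm_num⟩)
        exact (Int.not_odd_iff_even.mpr (Int.even_pow.mp this).1) hpodd
      · exact hro
    -- q even case
    have hp2odd : Odd (p ^ 2) := hpodd.pow
    obtain ⟨A, hA⟩ := hp2odd.sub_odd hrodd
    obtain ⟨B, hB⟩ := hp2odd.add_odd hrodd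
    have hsum : A + B = p ^ 2 := by
      have h2 : 2 * (A + B) = 2 * p ^ 2 := by linear_combination -hA - hB
      exact mul_left_cancel₀ two_ne_zero h2
    have hdiff : B - A = r := by
      have h2 : 2 * (B - A) = 2 * r := by linear_combination hA - hB
      exact mul_left_cancel₀ two_ne_zero h2
    obtain ⟨q₁, hq₁⟩ := hqe
    have hq₁0 : q₁ ≠ 0 := by rintro rfl; omega
    have hABeq : A * B = 4 * q₁ ^ 4 := by
      have h2 : 4 * (A * B) = 4 * (4 * q₁ ^ 4) := by
        linear_combination (-(2 * B)) * hA - (p ^ 2 - r) * hB + E +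
          (q ^ 3 + 2 * q₁ * q ^ 2 + 4 * q₁ ^ 2 * q + 8 * q₁ ^ 3) * hq₁
      exact mul_left_cancel₀ (by norm_num) h2
    have hBpos : 0 < B := by nlinarith
    have hApos : 0 < A := by nlinarith [pow_pos (abs_pos.mpr hq₁0) 4, sq_abs q₁, abs_nonneg q₁]
    have hpr : IsCoprime p r := by
      have h1 : IsCoprime p (q ^ 4) := hco.pow_right
      have h2 : q ^ 4 = -(r ^ 2) + p * p ^ 3 := by linear_combination -E
      rw [h2] at h1
      exact (IsCoprime.pow_right_iff two_pos).mp ((IsCoprime.neg_right_iff _ _).mp h1.of_add_mul_left_right)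
    have hABco : IsCoprime A B := by
      obtain ⟨u, v, huv⟩ := (hpr.pow_left : IsCoprime (p ^ 2) r)
      exact ⟨u - v, u + v, by linear_combination huv + u * hsum + v * hdiff⟩
    -- extract s, t with p ^ 2 = 4 s^4 + t^4
    obtain ⟨s, t, hstco, hs0, ht0, hP⟩ :
        ∃ s t : ℤ, IsCoprime s t ∧ s ≠ 0 ∧ t ≠ 0 ∧ p ^ 2 = 4 * s ^ 4 + t ^ 4 := by
      rcases Int.even_or_odd A with hAe | hAo
      · obtain ⟨A', hA'⟩ := id hAe
        have hBodd : Odd B := by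
          rcases Int.even_or_odd B with hBe | hBo
          · exact absurd (hABco.isUnit_of_dvd' (Even.two_dvd hAe) (Even.two_dvd hBe)) two_not_unit
          · exact hBo
        have hA'B : A' * B = 2 * q₁ ^ 4 := by
          have h2 : 2 * (A' * B) = 2 * (2 * q₁ ^ 4) := by linear_combination hABeq - B * hA'
          exact mul_left_cancel₀ two_ne_zero h2
        have hA'e : Even A' := by
          have : Even (A' * B) := by rw [hA'B]; exact ⟨q₁ ^ 4, by ring⟩
          rcases Int.even_mul.mp this with h' | h'
          · exact h'
          · exact absurd h' (Int.not_even_iff_odd.mpr hBodd)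
        obtain ⟨A'', hA''⟩ := hA'e
        have hA''B : A'' * B = q₁ ^ 4 := by
          have h2 : 2 * (A'' * B) = 2 * q₁ ^ 4 := by linear_combination hA'B - B * hA''
          exact mul_left_cancel₀ two_ne_zero h2
        have hA''dvd : A'' ∣ A := ⟨4, by linarith⟩
        have hA''co : IsCoprime A'' B := hABco.of_isCoprime_of_dvd_left hA''dvd
        have hA''pos : 0 < A'' := by nlinarith
        obtain ⟨s, t, hs, ht⟩ := quarts_of_coprime hA''pos hBpos hA''co hA''B
        refine ⟨s, t, ?_, ?_, ?_, ?_⟩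
        · have : IsCoprime (s ^ 4) (t ^ 4) := by rw [← hs, ← ht]; exact hA''co
          exact (IsCoprime.pow_left_iff (by norm_num)).mp
            ((IsCoprime.pow_right_iff (by norm_num)).mp this)
        · rintro rfl; rw [hs] at hA''pos; simp at hA''pos
        · rintro rfl; rw [ht] at hBpos; simp at hBpos
        · have : A = 4 * s ^ 4 := by rw [← hs]; linarith
          linarith [hsum, ht ▸ (rfl : B = B)]
      · have hBe : Even B := by
          have h4 : Even (A * B) := by rw [hABeq]; exact ⟨2 * q₁ ^ 4, by ring⟩
          rcases Int.even_mul.mp h4 with h' | h'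
          · exact absurd h' (Int.not_even_iff_odd.mpr hAo)
          · exact h'
        obtain ⟨B', hB'⟩ := hBe
        have hAB' : A * B' = 2 * q₁ ^ 4 := by
          have h2 : 2 * (A * B') = 2 * (2 * q₁ ^ 4) := by linear_combination hABeq - A * hB'
          exact mul_left_cancel₀ two_ne_zero h2
        have hB'e : Even B' := by
          have : Even (A * B') := by rw [hAB']; exact ⟨q₁ ^ 4, by ring⟩
          rcases Int.even_mul.mp this with h' | h'
          · exact absurd h' (Int.not_even_iff_odd.mpr hAo)
          · exact h'
        obtain ⟨B'', hB''⟩ := hB'e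
        have hAB'' : A * B'' = q₁ ^ 4 := by
          have h2 : 2 * (A * B'') = 2 * q₁ ^ 4 := by linear_combination hAB' - A * hB''
          exact mul_left_cancel₀ two_ne_zero h2
        have hB''dvd : B'' ∣ B := ⟨4, by linarith⟩
        have hB''co : IsCoprime A B'' := hABco.of_isCoprime_of_dvd_right hB''dvd
        have hB''pos : 0 < B'' := by nlinarith
        obtain ⟨t, s, ht, hs⟩ := quarts_of_coprime hApos hB''pos hB''co hAB''
        refine ⟨s, t, ?_, ?_, ?_, ?_⟩
        · have : IsCoprime (t ^ 4) (s ^ 4) := by rw [← ht, ← hs]; exact hB''co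
          exact ((IsCoprime.pow_left_iff (by norm_num)).mp
            ((IsCoprime.pow_right_iff (by norm_num)).mp this)).symm
        · rintro rfl; rw [hs] at hB''pos; simp at hB''pos
        · rintro rfl; rw [ht] at hApos; simp at hApos
        · have hBv : B = 4 * s ^ 4 := by rw [← hs]; linarith
          have hAv : A = t ^ 4 := ht
          linarith [hsum]
    -- stage 2: p ^ 2 = 4 s^4 + t^4, descend
    have htodd : Odd t := by
      rcases Int.even_or_odd t with hte | hto
      · exfalso
        have : Even (p ^ 2) := by
          rw [hP]
          exact Even.add ⟨2 * s ^ 4, by ring⟩ (Int.even_pow.mpr ⟨hte, by norm_num⟩)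
        exact (Int.not_even_iff_odd.mpr hp2odd) this
      · exact hto
    have ht2odd : Odd (t ^ 2) := htodd.pow
    obtain ⟨C, hC⟩ := hpodd.sub_odd ht2odd
    obtain ⟨D, hD⟩ := hpodd.add_odd ht2odd
    have hsum2 : C + D = p := by
      have h2 : 2 * (C + D) = 2 * p := by linear_combination -hC - hD
      exact mul_left_cancel₀ two_ne_zero h2
    have hdiff2 : D - C = t ^ 2 := by
      have h2 : 2 * (D - C) = 2 * t ^ 2 := by linear_combination hC - hD
      exact mul_left_cancel₀ two_ne_zero h2
    have hCD : C * D = s ^ 4 := by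
      have h2 : 4 * (C * D) = 4 * s ^ 4 := by
        linear_combination (-(2 * D)) * hC - (p - t ^ 2) * hD + hP
      exact mul_left_cancel₀ (by norm_num) h2
    have hDpos : 0 < D := by nlinarith [sq_nonneg t]
    have hCpos : 0 < C := by nlinarith [pow_pos (abs_pos.mpr hs0) 4, sq_abs s, abs_nonneg s]
    have hpt : IsCoprime t p := by
      obtain ⟨w, hw⟩ := htodd
      have h2t : IsCoprime (2 : ℤ) t := ⟨-w, 1, by linear_combination hw⟩
      have h4t : IsCoprime t (4 * s ^ 4) := by
        have hts : IsCoprime t (s ^ 4) := (hstco.symm).pow_right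
        have : IsCoprime t (4 : ℤ) := by
          have h22 : IsCoprime t (2 * 2 : ℤ) := IsCoprime.mul_right h2t.symm h2t.symm
          simpa using h22
        exact IsCoprime.mul_right this hts
      have h5 : IsCoprime t (4 * s ^ 4 + t * t ^ 3) := h4t.add_mul_left_right _
      have h6 : 4 * s ^ 4 + t * t ^ 3 = p ^ 2 := by linear_combination -hP
      rw [h6] at h5
      exact (IsCoprime.pow_right_iff two_pos).mp h5
    have hCDco : IsCoprime C D := by
      obtain ⟨u, v, huv⟩ := (hpt.symm.pow_right : IsCoprime p (t ^ 2))
      exact ⟨u - v, u + v, by linear_combination huv + u * hsum2 + v * hdiff2⟩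
    obtain ⟨g, h, hg, hh⟩ := quarts_of_coprime hCpos hDpos hCDco hCD
    have hg0 : g ≠ 0 := by rintro rfl; rw [hg] at hCpos; simp at hCpos
    have ht0' : t ≠ 0 := ht0
    have hlt : h.natAbs < p.natAbs := by
      apply natAbs_lt_of_pow4_lt_self hp
      have h1 : p + t ^ 2 = 2 * h ^ 4 := by rw [← hh]; linarith
      have h2 : t ^ 2 = h ^ 4 - g ^ 4 := by rw [← hg, ← hh]; linarith
      nlinarith [pow_pos (abs_pos.mpr hg0) 4, sq_abs g, abs_nonneg g]
    exact ⟨h, g, t, hg0, ht0', hlt, by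
      have h2 : t ^ 2 = h ^ 4 - g ^ 4 := by rw [← hg, ← hh]; linarith
      linarith⟩
  · -- q odd
    have hq2odd : q ^ 2 % 2 = 1 := Int.odd_iff.mp (hqo.pow)
    have hqr : IsCoprime q r := by
      have h1 : IsCoprime q (p ^ 4) := hco.symm.pow_right
      have h2 : p ^ 4 = r ^ 2 + q * q ^ 3 := by linear_combination E
      rw [h2] at h1
      exact (IsCoprime.pow_right_iff two_pos).mp h1.of_add_mul_left_right
    have htriple : PythagoreanTriple (q ^ 2) r (p ^ 2) := by
      show q ^ 2 * q ^ 2 + r * r = p ^ 2 * p ^ 2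
      linear_combination -E
    have hgcd : Int.gcd (q ^ 2) r = 1 :=
      Int.isCoprime_iff_gcd_eq_one.mp (hqr.pow_left)
    obtain ⟨m, n, h1, h2, h3, h4, -, -⟩ :=
      htriple.coprime_classification' hgcd hq2odd (by positivity)
    have hn0 : n ≠ 0 := by
      rintro rfl
      rw [mul_zero] at h2
      omega
    have hlt : m.natAbs < p.natAbs := by
      apply natAbs_lt_of_sq_lt
      nlinarith [sq_nonneg n, sq_abs n]
    refine ⟨m, n, q * p, hn0, by positivity, hlt, ?_⟩
    linear_combination (-(p ^ 2)) * h1 + (n ^ 2 - m ^ 2) * h3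




theorem flt4sub : ∀ (p q r : ℤ), p ^ 4 = q ^ 4 + r ^ 2 → q = 0 ∨ r = 0 := by
  suffices H : ∀ n : ℕ, ∀ p q r : ℤ, p.natAbs = n → p ^ 4 = q ^ 4 + r ^ 2 → q = 0 ∨ r = 0 by
    intro p q r hE; exact H p.natAbs p q r rfl hE
  intro n
  induction n using Nat.strong_induction_on with
  | _ n IH =>
    intro p q r hn E
    by_contra hcon
    push_neg at hcon
    obtain ⟨hq0, hr0⟩ := hcon
    -- p ≠ 0
    have hp0 : p ≠ 0 := by
      rintro rfl
      have h1 : q ^ 4 + r ^ 2 = 0 := by linarith [E]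
      have h2 : (0:ℤ) < q ^ 4 := by positivity
      have h3 : (0:ℤ) ≤ r ^ 2 := sq_nonneg r
      linarith
    -- it suffices to find a smaller nontrivial solution
    have step : ∀ p' q' r' : ℤ, q' ≠ 0 → r' ≠ 0 → p'.natAbs < p.natAbs →
        p' ^ 4 = q' ^ 4 + r' ^ 2 → False := by
      intro p' q' r' hq' hr' hlt hE'
      rcases IH p'.natAbs (hn ▸ hlt) p' q' r' rfl hE' with h | h
      · exact hq' h
      · exact hr' h
    -- normalize by gcd
    set g : ℤ := (Int.gcd p q : ℤ) with hgdef
    have hgpos : 0 < Int.gcd p q := Int.gcd_pos_of_ne_zero_left q hp0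
    have hgz : (0:ℤ) < g := by rw [hgdef]; exact_mod_cast hgpos
    have hgp : g ∣ p := Int.gcd_dvd_left _ _
    have hgq : g ∣ q := Int.gcd_dvd_right _ _
    have hg4r : g ^ 2 ∣ r := by
      have h1 : g ^ 4 ∣ r ^ 2 := by
        have h2 : g ^ 4 ∣ p ^ 4 := pow_dvd_pow_of_dvd hgp 4
        have h3 : g ^ 4 ∣ q ^ 4 := pow_dvd_pow_of_dvd hgq 4
        have : r ^ 2 = p ^ 4 - q ^ 4 := by linarith
        rw [this]; exact dvd_sub h2 h3
      have : (g ^ 2) ^ 2 ∣ r ^ 2 := by convert h1 using 1; ring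
      exact (Int.pow_dvd_pow_iff two_ne_zero).mp this
    obtain ⟨p₂, hp₂⟩ := hgp
    obtain ⟨q₂, hq₂⟩ := hgq
    obtain ⟨r₂, hr₂⟩ := hg4r
    have hE₂ : p₂ ^ 4 = q₂ ^ 4 + r₂ ^ 2 := by
      have h1 : g ^ 4 * p₂ ^ 4 = g ^ 4 * (q₂ ^ 4 + r₂ ^ 2) := by
        have := E
        rw [hp₂, hq₂, hr₂] at this
        linear_combination this
      exact mul_left_cancel₀ (by positivity) h1
    have hp₂0 : p₂ ≠ 0 := by rintro rfl; rw [mul_zero] at hp₂; exact hp0 hp₂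
    have hq₂0 : q₂ ≠ 0 := by rintro rfl; rw [mul_zero] at hq₂; exact hq0 hq₂
    have hr₂0 : r₂ ≠ 0 := by rintro rfl; rw [mul_zero] at hr₂; exact hr0 hr₂
    rcases eq_or_lt_of_le (by omega : 1 ≤ Int.gcd p q) with hg1 | hg1
    · -- gcd = 1 : coprime, normalize signs, apply descent_step
      have hco : IsCoprime p q := Int.isCoprime_iff_gcd_eq_one.mpr hg1.symm
      have hcoabs : IsCoprime |p| |q| := by
        rcases abs_choice p with h1 | h1 <;> rcases abs_choice q with h2 | h2 <;>
          rw [h1, h2] <;>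
          first
            | exact hco
            | exact hco.neg_right
            | exact hco.neg_left
            | exact hco.neg_left.neg_right
      have hEabs : |p| ^ 4 = |q| ^ 4 + |r| ^ 2 := by
        rw [← abs_pow, ← abs_pow, ← abs_pow]
        rw [abs_of_nonneg (a := p ^ 4) (by positivity),
          abs_of_nonneg (a := q ^ 4) (by positivity),
          abs_of_nonneg (a := r ^ 2) (by positivity)]
        exact E
      obtain ⟨p', q', r', hq', hr', hlt, hE'⟩ :=
        descent_step (abs_pos.mpr hp0) (abs_pos.mpr hq0) (abs_pos.mpr hr0) hcoabs hEabs
      rw [Int.natAbs_abs] at hlt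
      exact step p' q' r' hq' hr' hlt hE'
    · -- gcd > 1 : divide through
      have hlt : p₂.natAbs < p.natAbs := by
        rw [hp₂, Int.natAbs_mul]
        have h2 : 2 ≤ g.natAbs := by
          rw [hgdef, Int.natAbs_natCast]; omega
        have h3 : 1 ≤ p₂.natAbs := by
          rcases Nat.eq_zero_or_pos p₂.natAbs with h | h
          · exact absurd (Int.natAbs_eq_zero.mp h) hp₂0
          · exact h
        nlinarith
      exact step p₂ q₂ r₂ hq₂0 hr₂0 hlt hE₂





/-- from a sign-ambiguous square and positivity, get a square -/
lemma pos_sq_of_or {x a : ℤ} (hx : 0 < x) (h : x = a ^ 2 ∨ x = -a ^ 2) : x = a ^ 2 := by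
  rcases h with h | h
  · exact h
  · nlinarith [sq_nonneg a]

lemma neg_sq_of_or {x a : ℤ} (hx : x < 0) (h : x = a ^ 2 ∨ x = -a ^ 2) : x = -a ^ 2 := by
  rcases h with h | h
  · nlinarith [sq_nonneg a]
  · exact h


section aux
variable {m n u : ℤ}

lemma coprime_pairs (hco : IsCoprime m n) :
    IsCoprime m (m - n) ∧ IsCoprime m (m + n) ∧ IsCoprime n (m - n) ∧ IsCoprime n (m + n) := by
  refine ⟨?_, ?_, ?_, ?_⟩
  · have := (hco.neg_right).add_mul_left_right 1
    have he : -n + m * 1 = m - n := by ring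
    rwa [he] at this
  · have := hco.add_mul_left_right 1
    have he : n + m * 1 = m + n := by ring
    rwa [he] at this
  · have := (hco.symm).add_mul_left_right (-1)
    have he : m + n * (-1) = m - n := by ring
    rwa [he] at this
  · have := (hco.symm).add_mul_left_right 1
    have he : m + n * 1 = m + n := by ring
    rwa [he] at this

lemma key_mixed (hn : 0 < n) (hco : IsCoprime m n) (hm0 : m ≠ 0) (hmn : m - n ≠ 0)
    (hmn' : m + n ≠ 0) (hodd : Odd (m + n)) (hu0 : u ≠ 0)
    (h : u ^ 2 = m * n * (m - n) * (m + n)) : False := by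
  obtain ⟨c1, c2, c3, c4⟩ := coprime_pairs hco
  have hu2 : 0 < u ^ 2 := by positivity
  -- coprimality of m - n and m + n
  have c5 : IsCoprime (m - n) (m + n) := by
    rw [Int.isCoprime_iff_gcd_eq_one]
    set g : ℕ := Int.gcd (m - n) (m + n) with hg
    have hd1 : (g : ℤ) ∣ m - n := Int.gcd_dvd_left _ _
    have hd2 : (g : ℤ) ∣ m + n := Int.gcd_dvd_right _ _
    obtain ⟨a, b, hab⟩ := hco
    have hd3 : (g : ℤ) ∣ 2 := by
      have h2m : (g : ℤ) ∣ 2 * m := by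
        have : 2 * m = (m + n) + (m - n) := by ring
        rw [this]; exact dvd_add hd2 hd1
      have h2n : (g : ℤ) ∣ 2 * n := by
        have : 2 * n = (m + n) - (m - n) := by ring
        rw [this]; exact dvd_sub hd2 hd1
      have : (2 : ℤ) = a * (2 * m) + b * (2 * n) := by linear_combination 2 * hab.symm
      rw [this]
      exact dvd_add (Dvd.dvd.mul_left h2m a) (Dvd.dvd.mul_left h2n b)
    have hgann : g ∣ 2 := by exact_mod_cast hd3
    have hgle : g ≤ 2 := Nat.le_of_dvd (by norm_num) hgann
    interval_cases g
    · exfalso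
      have h1 : m - n = 0 := by
        have := Int.gcd_eq_zero_iff.mp (hg.symm ▸ rfl : Int.gcd (m - n) (m + n) = 0)
        exact this.1
      exact hmn h1
    · rfl
    · exfalso
      have h2 : (2 : ℤ) ∣ m + n := by exact_mod_cast hd2
      obtain ⟨k, hk⟩ := h2
      exact (Int.not_even_iff_odd.mpr hodd) ⟨k, by linarith⟩
  -- extract squares
  have e1 : m * (n * (m - n) * (m + n)) = u ^ 2 := by linear_combination -h
  have e2 : n * (m * (m - n) * (m + n)) = u ^ 2 := by linear_combination -h
  have e3 : (m - n) * (m * n * (m + n)) = u ^ 2 := by linear_combination -h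
  have e4 : (m + n) * (m * n * (m - n)) = u ^ 2 := by linear_combination -h
  obtain ⟨a, ha⟩ := Int.sq_of_isCoprime ((hco.mul_right c1).mul_right c2) e1
  obtain ⟨b, hb⟩ := Int.sq_of_isCoprime ((hco.symm.mul_right c3).mul_right c4) e2
  obtain ⟨c, hc⟩ := Int.sq_of_isCoprime ((c1.symm.mul_right c3.symm).mul_right c5) e3
  obtain ⟨d, hd⟩ := Int.sq_of_isCoprime ((c2.symm.mul_right c4.symm).mul_right c5.symm) e4
  have hb' : n = b ^ 2 := pos_sq_of_or hn hb
  have hbne : b ≠ 0 := by rintro rfl; simp at hb'; omega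
  rcases hm0.lt_or_gt with hmneg | hmpos
  · -- m < 0
    have ha' : m = -a ^ 2 := neg_sq_of_or hmneg ha
    have hc' : m - n = -c ^ 2 := neg_sq_of_or (by linarith) hc
    have hx : 0 < m * n * (m - n) := by
      have hpp := mul_pos (mul_pos (by linarith : (0:ℤ) < -m) hn)
        (by linarith : (0:ℤ) < n - m)
      have heq : m * n * (m - n) = -m * n * (n - m) := by ring
      rw [heq]; exact hpp
    have hsumpos : 0 < m + n := by
      rcases lt_trichotomy (m + n) 0 with hlt | heq | hgt
      · exfalso; nlinarith [mul_pos hx (neg_pos.mpr hlt), h, hu2]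
      · exact absurd heq hmn'
      · exact hgt
    have hd' : m + n = d ^ 2 := pos_sq_of_or hsumpos hd
    have hane : a ≠ 0 := by rintro rfl; simp at ha'; omega
    have hcd : c * d ≠ 0 := by
      apply mul_ne_zero
      · rintro rfl; simp at hc'; omega
      · rintro rfl; simp at hd'; omega
    have hE : b ^ 4 = a ^ 4 + (c * d) ^ 2 := by nlinarith [ha', hb', hc', hd']
    rcases flt4sub b a (c * d) hE with h' | h'
    · exact hane h'
    · exact hcd h'
  · -- m > 0
    have ha' : m = a ^ 2 := pos_sq_of_or hmpos ha
    have hd' : m + n = d ^ 2 := pos_sq_of_or (by linarith) hd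
    have hx : 0 < m * n * (m + n) := mul_pos (mul_pos hmpos hn) (by linarith)
    have hdiffpos : 0 < m - n := by
      rcases lt_trichotomy (m - n) 0 with hlt | heq | hgt
      · exfalso; nlinarith [mul_pos hx (neg_pos.mpr hlt), h, hu2]
      · exact absurd heq hmn
      · exact hgt
    have hc' : m - n = c ^ 2 := pos_sq_of_or hdiffpos hc
    have hbne2 : b ≠ 0 := hbne
    have hcd : c * d ≠ 0 := by
      apply mul_ne_zero
      · rintro rfl; simp at hc'; omega
      · rintro rfl; simp at hd'; omega
    have hE : a ^ 4 = b ^ 4 + (c * d) ^ 2 := by nlinarith [ha', hb', hc', hd']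
    rcases flt4sub a b (c * d) hE with h' | h'
    · exact hbne h'
    · exact hcd h'


lemma key_oddodd (hn : 0 < n) (hco : IsCoprime m n) (hm0 : m ≠ 0) (hmn : m - n ≠ 0)
    (hmn' : m + n ≠ 0) (hmo : Odd m) (hno : Odd n) (hu0 : u ≠ 0)
    (h : u ^ 2 = m * n * (m - n) * (m + n)) : False := by
  have hu2 : 0 < u ^ 2 := by positivity
  obtain ⟨e, he⟩ := hmo.sub_odd hno
  obtain ⟨f, hf⟩ := hmo.add_odd hno
  have hme : m = e + f := by omega
  have hnf : n = f - e := by omega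
  have he0 : e ≠ 0 := by omega
  have hf0 : f ≠ 0 := by omega
  -- u is even
  have hueven : Even u := by
    rcases Int.even_or_odd u with hue | huo
    · exact hue
    · exfalso
      have h1 : Odd (u ^ 2) := huo.pow
      obtain ⟨w, hw⟩ := h1
      have h2 : u ^ 2 = 4 * (m * n * e * f) := by
        linear_combination h + (m * n * (m + n)) * he + (2 * e * m * n) * hf
      omega
  obtain ⟨w, hw⟩ := hueven
  have hw0 : w ≠ 0 := by rintro rfl; simp at hw; exact hu0 hw
  have hw2 : w ^ 2 = m * n * e * f := by
    have h4 : 4 * w ^ 2 = 4 * (m * n * e * f) := by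
      linear_combination h + (m * n * (m + n)) * he + (2 * e * m * n) * hf -
        (u + w + w) * hw
    linarith
  have hwpos : 0 < w ^ 2 := by positivity
  obtain ⟨a0, b0, hab⟩ := id hco
  have cef : IsCoprime e f := ⟨a0 - b0, a0 + b0, by linear_combination hab - a0 * hme - b0 * hnf⟩
  have cem : IsCoprime e m := by
    have h1 := cef.add_mul_left_right 1
    have h2 : f + e * 1 = m := by rw [hme]; ring
    rwa [h2] at h1
  have cfm : IsCoprime f m := by
    have h1 := cef.symm.add_mul_left_right 1
    have h2 : e + f * 1 = m := by rw [hme]; ring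
    rwa [h2] at h1
  have cen : IsCoprime e n := by
    have h1 := cef.add_mul_left_right (-1)
    have h2 : f + e * (-1) = n := by rw [hnf]; ring
    rwa [h2] at h1
  have cfn : IsCoprime f n := by
    have h1 := (cef.symm.neg_right).add_mul_left_right 1
    have h2 : -e + f * 1 = n := by rw [hnf]; ring
    rwa [h2] at h1
  have e1 : m * (n * e * f) = w ^ 2 := by linear_combination -hw2
  have e2 : n * (m * e * f) = w ^ 2 := by linear_combination -hw2
  have e3 : e * (m * n * f) = w ^ 2 := by linear_combination -hw2
  have e4 : f * (m * n * e) = w ^ 2 := by linear_combination -hw2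
  obtain ⟨a, ha⟩ := Int.sq_of_isCoprime ((hco.mul_right cem.symm).mul_right cfm.symm) e1
  obtain ⟨b, hb⟩ := Int.sq_of_isCoprime ((hco.symm.mul_right cen.symm).mul_right cfn.symm) e2
  obtain ⟨c, hc⟩ := Int.sq_of_isCoprime ((cem.mul_right cen).mul_right cef) e3
  obtain ⟨d, hd⟩ := Int.sq_of_isCoprime ((cfm.mul_right cfn).mul_right cef.symm) e4
  have hb' : n = b ^ 2 := pos_sq_of_or hn hb
  have hbne : b ≠ 0 := by rintro rfl; simp at hb'; omega
  rcases hm0.lt_or_gt with hmneg | hmpos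
  · -- m < 0
    have ha' : m = -a ^ 2 := neg_sq_of_or hmneg ha
    have hane : a ≠ 0 := by rintro rfl; simp at ha'; omega
    have hc' : e = -c ^ 2 := neg_sq_of_or (by omega) hc
    have hx : 0 < m * n * e := by
      have hpp := mul_pos (mul_pos (by linarith : (0:ℤ) < -m) hn)
        (by omega : (0:ℤ) < -e)
      have heq : m * n * e = -m * n * -e := by ring
      rw [heq]; exact hpp
    have hfpos : 0 < f := by
      rcases lt_trichotomy f 0 with hlt | heq | hgt
      · exfalso; nlinarith [mul_pos hx (neg_pos.mpr hlt), hw2, hwpos]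
      · exact absurd heq hf0
      · exact hgt
    have hd' : f = d ^ 2 := pos_sq_of_or hfpos hd
    have hcd : 2 * c * d ≠ 0 := by
      have hcne : c ≠ 0 := by rintro rfl; simp at hc'; omega
      have hdne : d ≠ 0 := by rintro rfl; simp at hd'; omega
      positivity
    have h1 : n ^ 2 = b ^ 4 := by rw [hb'] <;> try ring
    have h2 : m ^ 2 = a ^ 4 := by rw [ha'] <;> try ring
    have h3 : (m - n) * (m + n) = 4 * (e * f) := by rw [he, hf] <;> try ring
    have h4 : 4 * (e * f) = -(4 * (c ^ 2 * d ^ 2)) := by rw [hc', hd'] <;> try ring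
    have hE : b ^ 4 = a ^ 4 + (2 * c * d) ^ 2 := by linear_combination -h1 + h2 - h3 - h4
    rcases flt4sub b a (2 * c * d) hE with h' | h'
    · exact hane h'
    · exact hcd h'
  · -- m > 0
    have ha' : m = a ^ 2 := pos_sq_of_or hmpos ha
    have hd' : f = d ^ 2 := pos_sq_of_or (by omega) hd
    have hx : 0 < m * n * f := mul_pos (mul_pos hmpos hn) (by omega)
    have hepos : 0 < e := by
      rcases lt_trichotomy e 0 with hlt | heq | hgt
      · exfalso; nlinarith [mul_pos hx (neg_pos.mpr hlt), hw2, hwpos]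
      · exact absurd heq he0
      · exact hgt
    have hc' : e = c ^ 2 := pos_sq_of_or hepos hc
    have hcd : 2 * c * d ≠ 0 := by
      have hcne : c ≠ 0 := by rintro rfl; simp at hc'; omega
      have hdne : d ≠ 0 := by rintro rfl; simp at hd'; omega
      positivity
    have h1 : n ^ 2 = b ^ 4 := by rw [hb'] <;> try ring
    have h2 : m ^ 2 = a ^ 4 := by rw [ha'] <;> try ring
    have h3 : (m - n) * (m + n) = 4 * (e * f) := by rw [he, hf] <;> try ring
    have h4 : 4 * (e * f) = 4 * (c ^ 2 * d ^ 2) := by rw [hc', hd'] <;> try ring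
    have hE : a ^ 4 = b ^ 4 + (2 * c * d) ^ 2 := by linear_combination h1 - h2 + h3 + h4
    rcases flt4sub a b (2 * c * d) hE with h' | h'
    · exact hbne h'
    · exact hcd h'

end aux

theorem key_lemma {m n u : ℤ} (hn : 0 < n) (hco : IsCoprime m n)
    (h : u ^ 2 = m * n * (m - n) * (m + n)) : m = 0 ∨ m = n ∨ m = -n := by
  by_contra hcon
  push_neg at hcon
  obtain ⟨hm0, hmn, hmn'⟩ := hcon
  have hmn2 : m - n ≠ 0 := sub_ne_zero.mpr hmn
  have hmn2' : m + n ≠ 0 := by intro hc; exact hmn' (by linarith)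
  have hu0 : u ≠ 0 := by
    intro hc
    rw [hc] at h
    have h2 := h.symm
    simp only [mul_eq_zero, zero_pow, OfNat.ofNat_ne_zero, ne_eq, not_false_iff] at h2
    have h3 : ((m = 0 ∨ n = 0) ∨ m - n = 0) ∨ m + n = 0 := by
      simpa using h2
    rcases h3 with ((h' | h') | h') | h'
    exacts [hm0 h', hn.ne' h', hmn2 h', hmn2' h']
  have hu2 : 0 < u ^ 2 := by positivity
  -- pairwise coprimality
  have c1 : IsCoprime m (m - n) := by
    have := (hco.neg_right).add_mul_left_right 1
    have he : -n + m * 1 = m - n := by ring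
    rwa [he] at this
  have c2 : IsCoprime m (m + n) := by
    have := hco.add_mul_left_right 1
    have he : n + m * 1 = m + n := by ring
    rwa [he] at this
  have c3 : IsCoprime n (m - n) := by
    have := (hco.symm).add_mul_left_right (-1)
    have he : m + n * (-1) = m - n := by ring
    rwa [he] at this
  have c4 : IsCoprime n (m + n) := by
    have := (hco.symm).add_mul_left_right 1
    have he : m + n * 1 = m + n := by ring
    rwa [he] at this
  rcases Int.even_or_odd m with hme | hmo
  · -- m even, n odd (coprime): m+n odd
    have hno : Odd n := by
      rcases Int.even_or_odd n with hne | hno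
      · exact absurd (hco.isUnit_of_dvd' hme.two_dvd hne.two_dvd) two_not_unit
      · exact hno
    have hodd : Odd (m + n) := hme.add_odd hno
    exact key_mixed hn hco hm0 hmn2 hmn2' hodd hu0 h
  · rcases Int.even_or_odd n with hne | hno
    · have hodd : Odd (m + n) := Odd.add_even hmo hne
      exact key_mixed hn hco hm0 hmn2 hmn2' hodd hu0 h
    · exact key_oddodd hn hco hm0 hmn2 hmn2' hmo hno hu0 h




lemma int_of_sq_rat (z : ℚ) (k : ℤ) (h : z ^ 2 = (k : ℚ)) : ∃ u : ℤ, z = (u : ℚ) := by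
  refine ⟨z.num, ?_⟩
  have hd : z.den ^ 2 = 1 := by
    have := Rat.den_pow z 2
    rw [h] at this
    simpa using this.symm
  have : z.den = 1 := by nlinarith [z.pos]
  rw [← Rat.num_div_den z, this]; simp

/-- rational points on y^2 = x^3 - x -/
lemma rat_points (x y : ℚ) (h : y ^ 2 = x ^ 3 - x) :
    (x = 0 ∧ y = 0) ∨ (x = 1 ∧ y = 0) ∨ (x = -1 ∧ y = 0) := by
  set m : ℤ := x.num with hm
  set n : ℤ := (x.den : ℤ) with hnd
  have hn : 0 < n := by rw [hnd]; exact_mod_cast x.pos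
  have hn0 : (n : ℚ) ≠ 0 := by exact_mod_cast hn.ne'
  have hxmn : x = (m : ℚ) / (n : ℚ) := by rw [hm, hnd]; exact_mod_cast (Rat.num_div_den x).symm
  have hco : IsCoprime m n := by
    rw [Int.isCoprime_iff_gcd_eq_one]
    exact_mod_cast x.reduced
  -- (y * n^2)^2 = m n (m - n)(m + n)
  have hy2 : (y * (n:ℚ) ^ 2) ^ 2 = ((m * n * (m - n) * (m + n) : ℤ) : ℚ) := by
    push_cast
    rw [mul_pow, h, hxmn]
    field_simp
    ring
  obtain ⟨u, hu⟩ := int_of_sq_rat _ _ hy2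
  have hueq : (u : ℚ) ^ 2 = ((m * n * (m - n) * (m + n) : ℤ) : ℚ) := by rw [← hu]; exact hy2
  have huz : u ^ 2 = m * n * (m - n) * (m + n) := by exact_mod_cast hueq
  have hcase := key_lemma hn hco huz
  have hy0 : ∀ hx0 : x ^ 3 - x = 0, y = 0 := by
    intro hx0
    have : y ^ 2 = 0 := by rw [h, hx0]
    exact pow_eq_zero_iff (by norm_num) |>.mp this
  rcases hcase with h' | h' | h'
  · left
    have hx0 : x = 0 := by rw [hxmn, h']; simp
    exact ⟨hx0, hy0 (by rw [hx0]; ring)⟩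
  · right; left
    have hx0 : x = 1 := by rw [hxmn, h']; field_simp
    exact ⟨hx0, hy0 (by rw [hx0]; ring)⟩
  · right; right
    have hx0 : x = -1 := by rw [hxmn, h']; field_simp; exact Int.cast_neg n
    exact ⟨hx0, hy0 (by rw [hx0]; ring)⟩


/-- The congruent number curve `y ^ 2 = x ^ 3 - x` over `ℚ`. -/
def congruentCurveOne : WeierstrassCurve ℚ := ⟨0, 0, 0, -1, 0⟩





namespace CCO

noncomputable abbrev W : WeierstrassCurve.Affine ℚ := congruentCurveOne.toAffine

lemma equation_iff' (x y : ℚ) : W.Equation x y ↔ y ^ 2 = x ^ 3 - x := by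
  rw [WeierstrassCurve.Affine.equation_iff]
  simp only [congruentCurveOne, W]
  constructor <;> intro h <;> linarith

lemma ns (x y : ℚ) (hx : x = 0 ∨ x = 1 ∨ x = -1) (hy : y = 0) : W.Nonsingular x y := by
  rw [WeierstrassCurve.Affine.nonsingular_iff, equation_iff']
  subst hy
  rcases hx with rfl | rfl | rfl <;> norm_num [congruentCurveOne, W]

noncomputable def P0 : W.Point := WeierstrassCurve.Affine.Point.some _ _ (ns 0 0 (by norm_num) rfl)
noncomputable def P1 : W.Point := WeierstrassCurve.Affine.Point.some _ _ (ns 1 0 (by norm_num) rfl)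
noncomputable def P2 : W.Point := WeierstrassCurve.Affine.Point.some _ _ (ns (-1) 0 (by norm_num) rfl)

lemma univ_eq : (Set.univ : Set W.Point) = {0, P0, P1, P2} := by
  ext P
  simp only [Set.mem_univ, true_iff, Set.mem_insert_iff, Set.mem_singleton_iff]
  cases P with
  | zero => left; rfl
  | @some x y h =>
    have hE : y ^ 2 = x ^ 3 - x :=
      (equation_iff' x y).mp ((WeierstrassCurve.Affine.nonsingular_iff x y).mp h).1
    rcases rat_points x y hE with ⟨hx, hy⟩ | ⟨hx, hy⟩ | ⟨hx, hy⟩ <;> subst hx <;> subst hy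
    · right; left; rfl
    · right; right; left; rfl
    · right; right; right; rfl

lemma card_four : Nat.card W.Point = 4 := by
  rw [← Set.ncard_univ, univ_eq]
  rw [Set.ncard_insert_of_notMem (by simp [P0, P1, P2]),
    Set.ncard_insert_of_notMem (by simp [P0, P1, P2]),
    Set.ncard_insert_of_notMem (by simp only [Set.mem_insert_iff, Set.mem_singleton_iff, P1, P2]; norm_num),
    Set.ncard_singleton]

end CCO


/-- The elliptic curve `y ^ 2 = x ^ 3 - x` has exactly four rational points: the point at
infinity, `(0, 0)`, `(1, 0)` and `(-1, 0)`. -/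
theorem congruent_curve_one_points :
    (∀ x y : ℚ, congruentCurveOne.toAffine.Equation x y →
        (x = 0 ∧ y = 0) ∨ (x = 1 ∧ y = 0) ∨ (x = -1 ∧ y = 0)) ∧
      Nat.card congruentCurveOne.toAffine.Point = 4 := by
  constructor
  · intro x y hxy
    exact rat_points x y ((CCO.equation_iff' x y).mp hxy)
  · exact CCO.card_four
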